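/- If m < n, then ℕ^n (vectors with all coordinates positive integers) is not contained in the union of finitely many translates of subspaces of ℚ^n each of dimension at most m. -/

import Mathlib

open Polynomial

/-- If `m < n`, then ℕ^n (vectors with all positive coordinates, viewed in ℚ^n)
is not contained in the union of finitely many translates of subspaces of ℚ^n
each of dimension at most `m`. -/
theorem stmt0 (m n : ℕ) (hmn : m < n) (ι : Type) [Fintype ι]
    (v : ι → Fin n → ℚ) (V : ι → Submodule ℚ (Fin n → ℚ))
    (hdim : ∀ i, Module.finrank ℚ (V i) ≤ m) :
    ¬ (∀ x : Fin n → ℕ, (∀ k, 0 < x k) →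
        ∃ i, (fun k => (x k : ℚ)) - v i ∈ V i) := by
  intro h
  -- canonical basis vectors
  set e : Fin n → (Fin n → ℚ) := fun k => fun j => if k = j then 1 else 0 with he
  -- For each i, find a nonzero functional vanishing on V i
  have hf : ∀ i, ∃ f : (Fin n → ℚ) →ₗ[ℚ] ℚ, f ≠ 0 ∧ ∀ x ∈ V i, f x = 0 := by
    intro i
    have hlt : V i < ⊤ := by
      rcases lt_or_eq_of_le (le_top : V i ≤ ⊤) with h' | h'
      · exact h'
      · exfalso
        have : Module.finrank ℚ (V i) = n := by
          rw [h', finrank_top]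
          simp [Module.finrank_pi]
        have := hdim i
        omega
    obtain ⟨f, hf0, hfbot⟩ :=
      Submodule.exists_dual_map_eq_bot_of_lt_top hlt inferInstance
    refine ⟨f, hf0, fun x hx => ?_⟩
    have : f x ∈ (V i).map f := Submodule.mem_map_of_mem hx
    rwa [hfbot, Submodule.mem_bot] at this
  choose f hf0 hfv using hf
  -- the polynomial whose roots are the bad parameters for translate i
  set P : ι → ℚ[X] := fun i =>
    (∑ k : Fin n, C (f i (e k)) * X ^ ((k : ℕ) + 1)) - C (f i (v i)) with hP
  have hPne : ∀ i, P i ≠ 0 := by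
    intro i hPi
    apply hf0 i
    -- all coefficients f i (e k) vanish
    have hcoef : ∀ k : Fin n, f i (e k) = 0 := by
      intro k
      have := congrArg (fun q => q.coeff ((k : ℕ) + 1)) hPi
      simp only [hP, coeff_sub, finset_sum_coeff, coeff_C_mul, coeff_X_pow,
        coeff_C, coeff_zero] at this
      rw [Finset.sum_eq_single k] at this
      · simpa using this
      · intro b _ hbk
        have hne : ((k : ℕ) + 1) ≠ ((b : ℕ) + 1) := by
          intro hh
          exact hbk (Fin.ext (Nat.succ_injective hh)).symm
        simp [hne]
        intro hkb
        exact absurd (Fin.ext hkb) hbk.symm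
      · simp
    apply LinearMap.ext
    intro x
    rw [LinearMap.pi_apply_eq_sum_univ (f i) x]
    simp only [← he, hcoef, smul_zero, Finset.sum_const_zero, LinearMap.zero_apply]
    exact Finset.sum_eq_zero (fun j _ => by
      have := hcoef j
      simp only [he] at this
      rw [this, smul_zero])
  -- finite set of bad rationals
  have hroots : (⋃ i, {t : ℚ | (P i).IsRoot t}).Finite :=
    Set.finite_iUnion (fun i => Polynomial.finite_setOf_isRoot (hPne i))
  -- there is a positive natural t with ↑t not a root
  have hinf : (Set.range (fun t : ℕ => ((t + 1 : ℕ) : ℚ))).Infinite := by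
    apply Set.infinite_range_of_injective
    intro a b hab
    have : ((a + 1 : ℕ) : ℚ) = ((b + 1 : ℕ) : ℚ) := hab
    exact_mod_cast Nat.succ_injective (by exact_mod_cast this)
  obtain ⟨q, ⟨t, rfl⟩, hq⟩ := hinf.exists_notMem_finite hroots
  -- consider the point (s, s², ..., sⁿ) with s = t+1
  set s : ℕ := t + 1 with hs
  obtain ⟨i, hi⟩ := h (fun k => s ^ ((k : ℕ) + 1)) (fun k => pow_pos (Nat.succ_pos t) _)
  apply hq
  refine Set.mem_iUnion.mpr ⟨i, ?_⟩
  have key : f i ((fun k : Fin n => ((s ^ ((k : ℕ) + 1) : ℕ) : ℚ)) - v i) = 0 := hfv i _ hi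
  rw [map_sub, sub_eq_zero] at key
  show (P i).eval ((s : ℕ) : ℚ) = 0
  rw [hP]
  simp only [eval_sub, eval_finset_sum, eval_mul, eval_C, eval_pow, eval_X]
  rw [← key, LinearMap.pi_apply_eq_sum_univ (f i) (fun k : Fin n => ((s ^ ((k : ℕ) + 1) : ℕ) : ℚ))]
  simp only [← he, smul_eq_mul, Nat.cast_pow]
  exact sub_eq_zero.mpr (Finset.sum_congr rfl (fun k _ => mul_comm _ _))
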